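/- Let R : ℝ → ℝ be continuous, even, nonnegative, and integrable on [0,∞). Let λ be the uniform probability (Lebesgue) measure on [0,1]. Then lim_{a→∞} a · ∫₀¹∫₀¹ R(a(u−v)) dλ(u) dλ(v) = 2 ∫₀^∞ R(t) dt. -/

import Mathlib

open MeasureTheory Filter Set intervalIntegral

theorem stmt2 (R : ℝ → ℝ) (hc : Continuous R) (he : ∀ t, R (-t) = R t)
    (hnn : ∀ t, 0 ≤ R t) (hi : MeasureTheory.IntegrableOn R (Set.Ici 0)) :
    Filter.Tendsto
      (fun a : ℝ => a * ∫ u in Set.Icc (0:ℝ) 1, ∫ v in Set.Icc (0:ℝ) 1, R (a * (u - v)))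
      Filter.atTop (nhds (2 * ∫ t in Set.Ici (0:ℝ), R t)) := by
  -- R is integrable on all of ℝ
  have hIic : IntegrableOn R (Iic (0:ℝ)) := by
    have m : MeasurableEmbedding fun x : ℝ => -x := (Homeomorph.neg ℝ).measurableEmbedding
    have h' : IntegrableOn (R ∘ fun x : ℝ => -x) ((fun x : ℝ => -x) ⁻¹' (Ici 0)) := by
      rw [← m.integrableOn_map_iff, Measure.map_neg_eq_self (volume : Measure ℝ)]
      exact hi
    have hset : ((fun x : ℝ => -x) ⁻¹' (Ici 0)) = Iic 0 := by ext x; simp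
    rw [hset] at h'
    exact h'.congr_fun (fun x _ => he x) measurableSet_Iic
  have hiR : Integrable R := by
    rw [← integrableOn_univ, ← Set.Iic_union_Ioi (a := (0:ℝ))]
    exact hIic.union (hi.mono_set Set.Ioi_subset_Ici_self)
  -- total integral equals twice the integral on [0, ∞)
  have h2 : (∫ t, R t) = 2 * ∫ t in Ici (0:ℝ), R t := by
    have hsplit : (∫ t, R t) = (∫ t in Iic (0:ℝ), R t) + ∫ t in Ioi (0:ℝ), R t := by
      rw [← setIntegral_union (Iic_disjoint_Ioi le_rfl) measurableSet_Ioi hIic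
        (hi.mono_set Set.Ioi_subset_Ici_self), Set.Iic_union_Ioi, setIntegral_univ]
    have hneg : (∫ t in Iic (0:ℝ), R t) = ∫ t in Ioi (0:ℝ), R t := by
      rw [show (∫ t in Iic (0:ℝ), R t) = ∫ t in Iic (0:ℝ), R (-t) from
        setIntegral_congr_fun measurableSet_Iic fun x _ => (he x).symm]
      rw [integral_comp_neg_Iic]
      norm_num
    rw [hsplit, hneg, ← integral_Ici_eq_integral_Ioi, two_mul]
  -- the transformed integrand
  set Φ : ℝ → ℝ → ℝ := fun a u => ∫ x in (a * (u - 1))..(a * u), R x with hΦ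
  -- key pointwise identity for a > 0
  have key : ∀ a : ℝ, 0 < a →
      a * (∫ u in Set.Icc (0:ℝ) 1, ∫ v in Set.Icc (0:ℝ) 1, R (a * (u - v)))
        = ∫ u in Set.Icc (0:ℝ) 1, Φ a u := by
    intro a ha
    rw [← MeasureTheory.integral_const_mul]
    refine setIntegral_congr_fun measurableSet_Icc fun u _ => ?_
    have h1 : (∫ v in Set.Icc (0:ℝ) 1, R (a * (u - v)))
        = ∫ v in (0:ℝ)..1, R (a * (u - v)) := by
      rw [integral_Icc_eq_integral_Ioc, ← intervalIntegral.integral_of_le zero_le_one]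
    rw [h1]
    have h3 : (∫ v in (0:ℝ)..1, R (a * (u - v)))
        = ∫ w in (u - 1)..(u - 0), R (a * w) :=
      intervalIntegral.integral_comp_sub_left (fun w => R (a * w)) u
    rw [h3, intervalIntegral.integral_comp_mul_left R ha.ne']
    simp only [sub_zero, smul_eq_mul, hΦ]
    rw [← mul_assoc, mul_inv_cancel₀ ha.ne', one_mul]
  -- continuity of Φ a
  have hGcont : Continuous fun y : ℝ => ∫ x in (0:ℝ)..y, R x :=
    intervalIntegral.continuous_primitive (μ := volume) (fun a b => (hc.intervalIntegrable a b : IntervalIntegrable R volume a b)) 0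
  have hΦeq : ∀ a u, Φ a u = (∫ x in (0:ℝ)..(a * u), R x) - ∫ x in (0:ℝ)..(a * (u - 1)), R x := by
    intro a u
    have := intervalIntegral.integral_add_adjacent_intervals (μ := volume)
      (hc.intervalIntegrable 0 (a * (u - 1))) (hc.intervalIntegrable (a * (u - 1)) (a * u))
    simp only [hΦ]
    linarith
  have hΦcont : ∀ a : ℝ, Continuous (Φ a) := by
    intro a
    have h' : Continuous fun u =>
        (∫ x in (0:ℝ)..(a * u), R x) - ∫ x in (0:ℝ)..(a * (u - 1)), R x :=
      (hGcont.comp (continuous_const.mul continuous_id)).sub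
        (hGcont.comp (continuous_const.mul (continuous_id.sub continuous_const)))
    exact (funext (hΦeq a) : Φ a = _) ▸ h'
  -- a.e. membership in the open interval
  have hae : ∀ᵐ u ∂(volume.restrict (Set.Icc (0:ℝ) 1)), u ∈ Set.Ioo (0:ℝ) 1 := by
    rw [ae_restrict_iff' measurableSet_Icc, ae_iff]
    refine measure_mono_null (fun x hx => ?_)
      (((Set.finite_singleton (1:ℝ)).insert 0).measure_zero volume)
    simp only [mem_setOf_eq, _root_.not_imp] at hx
    obtain ⟨hIcc, hnIoo⟩ := hx
    simp only [Set.mem_Icc] at hIcc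
    simp only [Set.mem_Ioo, not_and_or, not_lt] at hnIoo
    simp only [Set.mem_insert_iff, Set.mem_singleton_iff]
    rcases hnIoo with h | h
    · left; linarith [hIcc.1]
    · right; linarith [hIcc.2]
  -- dominated convergence
  have hDCT : Tendsto (fun a : ℝ => ∫ u in Set.Icc (0:ℝ) 1, Φ a u) atTop
      (nhds (∫ _ in Set.Icc (0:ℝ) 1, (∫ t, R t))) := by
    apply MeasureTheory.tendsto_integral_filter_of_dominated_convergence (fun _ => ∫ t, R t)
    · exact Eventually.of_forall fun a => (hΦcont a).aestronglyMeasurable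
    · filter_upwards [eventually_ge_atTop (0:ℝ)] with a ha
      refine ae_restrict_of_forall_mem measurableSet_Icc fun u hu => ?_
      have hle : a * (u - 1) ≤ a * u := by nlinarith
      have h0 : 0 ≤ Φ a u := by
        simp only [hΦ]
        exact intervalIntegral.integral_nonneg hle fun x _ => hnn x
      rw [Real.norm_of_nonneg h0]
      simp only [hΦ]
      rw [intervalIntegral.integral_of_le hle]
      exact setIntegral_le_integral hiR (Eventually.of_forall hnn)
    · exact (integrableOn_const (by simp [Real.volume_Icc]))
    · filter_upwards [hae] with u hu
      exact intervalIntegral_tendsto_integral hiR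
        ((tendsto_mul_const_atBot_of_neg (by linarith [hu.2] : u - 1 < 0)).2 tendsto_id)
        (tendsto_id.atTop_mul_const hu.1)
  have hconst : (∫ _ in Set.Icc (0:ℝ) 1, (∫ t, R t)) = 2 * ∫ t in Set.Ici (0:ℝ), R t := by
    rw [setIntegral_const]
    simp [Real.volume_Icc, h2]
  refine Tendsto.congr' ?_ (hconst ▸ hDCT)
  filter_upwards [eventually_gt_atTop (0:ℝ)] with a ha
  exact (key a ha).symm
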